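/- Let F := (y³−z³)(x²−τ²yz)³ and G := (x³−z³)(−xz+τy²)³ in ℂ[x,y,z]. Then (Ω − τ·Ξ) ∧ (G·dF − F·dG) = 0, i.e. all three coefficient polynomials of this wedge vanish identically. In other words, F/G is a rational first integral of the Lins Neto foliation ℱ_{−τ}, which is an elliptic pencil of nonics. -/

import Mathlib

open MvPolynomial

set_option maxHeartbeats 4000000
noncomputable section

/-- τ = e^{2πi/3}, a primitive cube root of unity. -/
def τ : ℂ := Complex.exp (2 * Real.pi * Complex.I / 3)

/-- The polynomial ring ℂ[x,y,z]. -/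
abbrev R3 : Type := MvPolynomial (Fin 3) ℂ

def Xv : R3 := X 0
def Yv : R3 := X 1
def Zv : R3 := X 2

/-- The 1-form Ω (coefficients of dx, dy, dz). -/
def Om : Fin 3 → R3 :=
  ![Zv * (Yv - Zv) * (Zv ^ 2 + Yv ^ 2 + Yv * Zv) * Yv,
    -(Zv * (Xv - Zv) * (Xv ^ 2 + Zv * Xv + Zv ^ 2) * Xv),
    Xv * Yv * (Xv - Yv) * (Xv ^ 2 + Xv * Yv + Yv ^ 2)]

/-- The 1-form Ξ (coefficients of dx, dy, dz). -/
def Xi : Fin 3 → R3 :=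
  ![-((Yv - Zv) * (Zv ^ 2 + Yv ^ 2 + Yv * Zv) * Xv ^ 2),
    (Xv - Zv) * (Xv ^ 2 + Zv * Xv + Zv ^ 2) * Yv ^ 2,
    -(Zv ^ 2 * (Xv - Yv) * (Xv ^ 2 + Xv * Yv + Yv ^ 2))]

/-- The coefficients of `ω ∧ η` all vanish. -/
def WedgeZero (ω η : Fin 3 → R3) : Prop :=
  ∀ i j : Fin 3, ω i * η j - ω j * η i = 0

/-- The 1-form `G·dF − F·dG`. -/
def pencilForm (F G : R3) : Fin 3 → R3 :=
  fun i => G * pderiv i F - F * pderiv i G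

def Fpol : R3 := (Yv ^ 3 - Zv ^ 3) * (Xv ^ 2 - C τ ^ 2 * Yv * Zv) ^ 3

def Gpol : R3 := (Xv ^ 3 - Zv ^ 3) * (-(Xv * Zv) + C τ * Yv ^ 2) ^ 3


lemma htau : τ ^ 2 + τ + 1 = 0 := by
  have hp := Complex.isPrimitiveRoot_exp 3 (by norm_num)
  have h3 : τ ^ 3 = 1 := by simpa [τ] using hp.pow_eq_one
  have hne : τ ≠ 1 := by
    have h1 : τ ^ 1 ≠ 1 := hp.pow_ne_one_of_pos_of_lt one_ne_zero (by norm_num)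
    simpa using h1
  have hmul : (τ - 1) * (τ ^ 2 + τ + 1) = 0 := by linear_combination h3
  rcases mul_eq_zero.mp hmul with h | h
  · exact absurd (by linear_combination h) hne
  · exact h

def dF0 : R3 := ((-6:R3))*Xv*Yv^2*Zv^5*(C τ)^4 + (6:R3)*Xv*Yv^5*Zv^2*(C τ)^4 + (12:R3)*Xv^3*Yv*Zv^4*(C τ)^2 + ((-12:R3))*Xv^3*Yv^4*Zv*(C τ)^2 + ((-6:R3))*Xv^5*Zv^3 + (6:R3)*Xv^5*Yv^3
def dG0 : R3 := (3:R3)*Yv^4*Zv^4*(C τ)^2 + ((-6:R3))*Xv*Yv^2*Zv^5*(C τ) + (3:R3)*Xv^2*Zv^6 + (3:R3)*Xv^2*Yv^6*(C τ)^3 + ((-12:R3))*Xv^3*Yv^4*Zv*(C τ)^2 + (15:R3)*Xv^4*Yv^2*Zv^2*(C τ) + ((-6:R3))*Xv^5*Zv^3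

def dF1 : R3 := (3:R3)*Yv^2*Zv^6*(C τ)^6 + ((-6:R3))*Yv^5*Zv^3*(C τ)^6 + ((-6:R3))*Xv^2*Yv*Zv^5*(C τ)^4 + (15:R3)*Xv^2*Yv^4*Zv^2*(C τ)^4 + (3:R3)*Xv^4*Zv^4*(C τ)^2 + ((-12:R3))*Xv^4*Yv^3*Zv*(C τ)^2 + (3:R3)*Xv^6*Yv^2
def dG1 : R3 := ((-6:R3))*Yv^5*Zv^3*(C τ)^3 + (12:R3)*Xv*Yv^3*Zv^4*(C τ)^2 + ((-6:R3))*Xv^2*Yv*Zv^5*(C τ) + (6:R3)*Xv^3*Yv^5*(C τ)^3 + ((-12:R3))*Xv^4*Yv^3*Zv*(C τ)^2 + (6:R3)*Xv^5*Yv*Zv^2*(C τ)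

def dF2 : R3 := (6:R3)*Yv^3*Zv^5*(C τ)^6 + ((-3:R3))*Yv^6*Zv^2*(C τ)^6 + ((-15:R3))*Xv^2*Yv^2*Zv^4*(C τ)^4 + (6:R3)*Xv^2*Yv^5*Zv*(C τ)^4 + (12:R3)*Xv^4*Yv*Zv^3*(C τ)^2 + ((-3:R3))*Xv^4*Yv^4*(C τ)^2 + ((-3:R3))*Xv^6*Zv^2
def dG2 : R3 := ((-3:R3))*Yv^6*Zv^2*(C τ)^3 + (12:R3)*Xv*Yv^4*Zv^3*(C τ)^2 + ((-15:R3))*Xv^2*Yv^2*Zv^4*(C τ) + (6:R3)*Xv^3*Zv^5 + ((-3:R3))*Xv^4*Yv^4*(C τ)^2 + (6:R3)*Xv^5*Yv^2*Zv*(C τ) + ((-3:R3))*Xv^6*Zv^2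




lemma hCtau : (C τ : R3) ^ 2 + C τ + 1 = 0 := by
  have := htau
  calc (C τ : R3) ^ 2 + C τ + 1 = C (τ ^ 2 + τ + 1) := by push_cast [map_add, map_pow, map_one]; ring
    _ = 0 := by rw [htau, map_zero]

lemma px10 : pderiv (0 : Fin 3) (X 1 : R3) = 0 := pderiv_X_of_ne (by decide)
lemma px20 : pderiv (0 : Fin 3) (X 2 : R3) = 0 := pderiv_X_of_ne (by decide)
lemma px01 : pderiv (1 : Fin 3) (X 0 : R3) = 0 := pderiv_X_of_ne (by decide)
lemma px21 : pderiv (1 : Fin 3) (X 2 : R3) = 0 := pderiv_X_of_ne (by decide)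
lemma px02 : pderiv (2 : Fin 3) (X 0 : R3) = 0 := pderiv_X_of_ne (by decide)
lemma px12 : pderiv (2 : Fin 3) (X 1 : R3) = 0 := pderiv_X_of_ne (by decide)

lemma hdF0 : pderiv (0 : Fin 3) Fpol = dF0 := by
  simp only [Fpol, dF0, Xv, Yv, Zv, map_sub, map_add, map_neg, pderiv_mul, pderiv_pow, pderiv_X_self, pderiv_C, px10, px20, px01, px21, px02, px12]
  ring

lemma hdG0 : pderiv (0 : Fin 3) Gpol = dG0 := by
  simp only [Gpol, dG0, Xv, Yv, Zv, map_sub, map_add, map_neg, pderiv_mul, pderiv_pow, pderiv_X_self, pderiv_C, px10, px20, px01, px21, px02, px12]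
  ring

lemma hdF1 : pderiv (1 : Fin 3) Fpol = dF1 := by
  simp only [Fpol, dF1, Xv, Yv, Zv, map_sub, map_add, map_neg, pderiv_mul, pderiv_pow, pderiv_X_self, pderiv_C, px10, px20, px01, px21, px02, px12]
  ring

lemma hdG1 : pderiv (1 : Fin 3) Gpol = dG1 := by
  simp only [Gpol, dG1, Xv, Yv, Zv, map_sub, map_add, map_neg, pderiv_mul, pderiv_pow, pderiv_X_self, pderiv_C, px10, px20, px01, px21, px02, px12]
  ring

lemma hdF2 : pderiv (2 : Fin 3) Fpol = dF2 := by
  simp only [Fpol, dF2, Xv, Yv, Zv, map_sub, map_add, map_neg, pderiv_mul, pderiv_pow, pderiv_X_self, pderiv_C, px10, px20, px01, px21, px02, px12]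
  ring

lemma hdG2 : pderiv (2 : Fin 3) Gpol = dG2 := by
  simp only [Gpol, dG2, Xv, Yv, Zv, map_sub, map_add, map_neg, pderiv_mul, pderiv_pow, pderiv_X_self, pderiv_C, px10, px20, px01, px21, px02, px12]
  ring

lemma K01 : (Om 0 - C τ * Xi 0) * pencilForm Fpol Gpol 1 - (Om 1 - C τ * Xi 1) * pencilForm Fpol Gpol 0 = 0 := by
  simp only [Om, Xi, pencilForm, Matrix.cons_val_zero, Matrix.cons_val_one, Matrix.head_cons, Matrix.cons_val_two, Matrix.tail_cons, hdF0, hdF1, hdF2, hdG0, hdG1, hdG2]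
  simp only [dF0, dF1, dF2, dG0, dG1, dG2, Fpol, Gpol]
  linear_combination ((3:R3)*Xv^2*Yv^8*Zv^12*(C τ)^7 + ((-3:R3))*Xv^2*Yv^8*Zv^12*(C τ)^8 + ((-6:R3))*Xv^2*Yv^11*Zv^9*(C τ)^7 + (6:R3)*Xv^2*Yv^11*Zv^9*(C τ)^8 + (3:R3)*Xv^2*Yv^14*Zv^6*(C τ)^7 + ((-3:R3))*Xv^2*Yv^14*Zv^6*(C τ)^8 + ((-3:R3))*Xv^3*Yv^6*Zv^13*(C τ)^6 + (3:R3)*Xv^3*Yv^6*Zv^13*(C τ)^7 + (6:R3)*Xv^3*Yv^9*Zv^10*(C τ)^6 + ((-6:R3))*Xv^3*Yv^9*Zv^10*(C τ)^7 + ((-3:R3))*Xv^3*Yv^12*Zv^7*(C τ)^6 + (3:R3)*Xv^3*Yv^12*Zv^7*(C τ)^7 + ((-3:R3))*Xv^4*Yv^4*Zv^14*(C τ)^5 + (3:R3)*Xv^4*Yv^4*Zv^14*(C τ)^6 + (9:R3)*Xv^4*Yv^10*Zv^8*(C τ)^5 + ((-9:R3))*Xv^4*Yv^10*Zv^8*(C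 τ)^6 + ((-6:R3))*Xv^4*Yv^13*Zv^5*(C τ)^5 + (6:R3)*Xv^4*Yv^13*Zv^5*(C τ)^6 + (3:R3)*Xv^5*Yv^2*Zv^15*(C τ)^4 + ((-3:R3))*Xv^5*Yv^2*Zv^15*(C τ)^5 + ((-9:R3))*Xv^5*Yv^8*Zv^9*(C τ)^4 + (9:R3)*Xv^5*Yv^8*Zv^9*(C τ)^5 + ((-3:R3))*Xv^5*Yv^8*Zv^9*(C τ)^7 + (3:R3)*Xv^5*Yv^8*Zv^9*(C τ)^8 + (6:R3)*Xv^5*Yv^11*Zv^6*(C τ)^4 + ((-6:R3))*Xv^5*Yv^11*Zv^6*(C τ)^5 + (6:R3)*Xv^5*Yv^11*Zv^6*(C τ)^7 + ((-6:R3))*Xv^5*Yv^11*Zv^6*(C τ)^8 + ((-3:R3))*Xv^5*Yv^14*Zv^3*(C τ)^7 + (3:R3)*Xv^5*Yv^14*Zv^3*(C τ)^8 + (6:R3)*Xv^6*Yv^3*Zv^13*(C τ)^3 + ((-6:R3))*Xv^6*Yv^3*Zv^13*(C τ)^4 + ((-9:R3))*Xv^6*Yv^6*Zv^10*(C τ)^3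 + (9:R3)*Xv^6*Yv^6*Zv^10*(C τ)^4 + (3:R3)*Xv^6*Yv^6*Zv^10*(C τ)^6 + ((-3:R3))*Xv^6*Yv^6*Zv^10*(C τ)^7 + ((-6:R3))*Xv^6*Yv^9*Zv^7*(C τ)^6 + (6:R3)*Xv^6*Yv^9*Zv^7*(C τ)^7 + (3:R3)*Xv^6*Yv^12*Zv^4*(C τ)^3 + ((-3:R3))*Xv^6*Yv^12*Zv^4*(C τ)^4 + (3:R3)*Xv^6*Yv^12*Zv^4*(C τ)^6 + ((-3:R3))*Xv^6*Yv^12*Zv^4*(C τ)^7 + ((-6:R3))*Xv^7*Yv*Zv^14*(C τ)^2 + (6:R3)*Xv^7*Yv*Zv^14*(C τ)^3 + (9:R3)*Xv^7*Yv^4*Zv^11*(C τ)^2 + ((-9:R3))*Xv^7*Yv^4*Zv^11*(C τ)^3 + (3:R3)*Xv^7*Yv^4*Zv^11*(C τ)^5 + ((-3:R3))*Xv^7*Yv^4*Zv^11*(C τ)^6 + ((-3:R3))*Xv^7*Yv^10*Zv^5*(C τ)^2 + (3:R3)*Xv^7*Yv^10*Zv^5*(C τ)^3 + ((-9:R3))*Xv^7*Yv^10*Zv^5*(C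 τ)^5 + (9:R3)*Xv^7*Yv^10*Zv^5*(C τ)^6 + (6:R3)*Xv^7*Yv^13*Zv^2*(C τ)^5 + ((-6:R3))*Xv^7*Yv^13*Zv^2*(C τ)^6 + ((-3:R3))*Xv^8*Yv^2*Zv^12*(C τ) + (3:R3)*Xv^8*Yv^2*Zv^12*(C τ)^2 + ((-3:R3))*Xv^8*Yv^2*Zv^12*(C τ)^4 + (3:R3)*Xv^8*Yv^2*Zv^12*(C τ)^5 + (6:R3)*Xv^8*Yv^5*Zv^9*(C τ) + ((-6:R3))*Xv^8*Yv^5*Zv^9*(C τ)^2 + ((-3:R3))*Xv^8*Yv^8*Zv^6*(C τ) + (3:R3)*Xv^8*Yv^8*Zv^6*(C τ)^2 + (9:R3)*Xv^8*Yv^8*Zv^6*(C τ)^4 + ((-9:R3))*Xv^8*Yv^8*Zv^6*(C τ)^5 + ((-6:R3))*Xv^8*Yv^11*Zv^3*(C τ)^4 + (6:R3)*Xv^8*Yv^11*Zv^3*(C τ)^5 + (3:R3)*Xv^9*Zv^13 + ((-3:R3))*Xv^9*Zv^13*(C τ) + ((-6:R3))*Xv^9*Yv^3*Zv^10 + (6:R3)*Xv^9*Yv^3*Zv^10*(C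 τ) + ((-6:R3))*Xv^9*Yv^3*Zv^10*(C τ)^3 + (6:R3)*Xv^9*Yv^3*Zv^10*(C τ)^4 + (3:R3)*Xv^9*Yv^6*Zv^7 + ((-3:R3))*Xv^9*Yv^6*Zv^7*(C τ) + (9:R3)*Xv^9*Yv^6*Zv^7*(C τ)^3 + ((-9:R3))*Xv^9*Yv^6*Zv^7*(C τ)^4 + ((-3:R3))*Xv^9*Yv^12*Zv*(C τ)^3 + (3:R3)*Xv^9*Yv^12*Zv*(C τ)^4 + (6:R3)*Xv^10*Yv*Zv^11*(C τ)^2 + ((-6:R3))*Xv^10*Yv*Zv^11*(C τ)^3 + ((-9:R3))*Xv^10*Yv^4*Zv^8*(C τ)^2 + (9:R3)*Xv^10*Yv^4*Zv^8*(C τ)^3 + (3:R3)*Xv^10*Yv^10*Zv^2*(C τ)^2 + ((-3:R3))*Xv^10*Yv^10*Zv^2*(C τ)^3 + (3:R3)*Xv^11*Yv^2*Zv^9*(C τ) + ((-3:R3))*Xv^11*Yv^2*Zv^9*(C τ)^2 + ((-6:R3))*Xv^11*Yv^5*Zv^6*(C τ) + (6:R3)*Xv^11*Yv^5*Zv^6*(C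 τ)^2 + (3:R3)*Xv^11*Yv^8*Zv^3*(C τ) + ((-3:R3))*Xv^11*Yv^8*Zv^3*(C τ)^2 + ((-3:R3))*Xv^12*Zv^10 + (3:R3)*Xv^12*Zv^10*(C τ) + (6:R3)*Xv^12*Yv^3*Zv^7 + ((-6:R3))*Xv^12*Yv^3*Zv^7*(C τ) + ((-3:R3))*Xv^12*Yv^6*Zv^4 + (3:R3)*Xv^12*Yv^6*Zv^4*(C τ)) * hCtau

lemma K10 : (Om 1 - C τ * Xi 1) * pencilForm Fpol Gpol 0 - (Om 0 - C τ * Xi 0) * pencilForm Fpol Gpol 1 = 0 := by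
  linear_combination -K01

lemma K02 : (Om 0 - C τ * Xi 0) * pencilForm Fpol Gpol 2 - (Om 2 - C τ * Xi 2) * pencilForm Fpol Gpol 0 = 0 := by
  simp only [Om, Xi, pencilForm, Matrix.cons_val_zero, Matrix.cons_val_one, Matrix.head_cons, Matrix.cons_val_two, Matrix.tail_cons, hdF0, hdF1, hdF2, hdG0, hdG1, hdG2]
  simp only [dF0, dF1, dF2, dG0, dG1, dG2, Fpol, Gpol]
  linear_combination (((-3:R3))*Xv^2*Yv^9*Zv^11*(C τ)^7 + (3:R3)*Xv^2*Yv^9*Zv^11*(C τ)^8 + (6:R3)*Xv^2*Yv^12*Zv^8*(C τ)^7 + ((-6:R3))*Xv^2*Yv^12*Zv^8*(C τ)^8 + ((-3:R3))*Xv^2*Yv^15*Zv^5*(C τ)^7 + (3:R3)*Xv^2*Yv^15*Zv^5*(C τ)^8 + (3:R3)*Xv^3*Yv^7*Zv^12*(C τ)^6 + ((-3:R3))*Xv^3*Yv^7*Zv^12*(C τ)^7 + ((-6:R3))*Xv^3*Yv^10*Zv^9*(C τ)^6 + (6:R3)*Xv^3*Yv^10*Zv^9*(C τ)^7 + (3:R3)*Xv^3*Yv^13*Zv^6*(C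 τ)^6 + ((-3:R3))*Xv^3*Yv^13*Zv^6*(C τ)^7 + (3:R3)*Xv^4*Yv^5*Zv^13*(C τ)^5 + ((-3:R3))*Xv^4*Yv^5*Zv^13*(C τ)^6 + ((-9:R3))*Xv^4*Yv^11*Zv^7*(C τ)^5 + (9:R3)*Xv^4*Yv^11*Zv^7*(C τ)^6 + (6:R3)*Xv^4*Yv^14*Zv^4*(C τ)^5 + ((-6:R3))*Xv^4*Yv^14*Zv^4*(C τ)^6 + ((-3:R3))*Xv^5*Yv^3*Zv^14*(C τ)^4 + (3:R3)*Xv^5*Yv^3*Zv^14*(C τ)^5 + (9:R3)*Xv^5*Yv^9*Zv^8*(C τ)^4 + ((-9:R3))*Xv^5*Yv^9*Zv^8*(C τ)^5 + (3:R3)*Xv^5*Yv^9*Zv^8*(C τ)^7 + ((-3:R3))*Xv^5*Yv^9*Zv^8*(C τ)^8 + ((-6:R3))*Xv^5*Yv^12*Zv^5*(C τ)^4 + (6:R3)*Xv^5*Yv^12*Zv^5*(C τ)^5 + ((-6:R3))*Xv^5*Yv^12*Zv^5*(C τ)^7 + (6:R3)*Xv^5*Yv^12*Zv^5*(C τ)^8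 + (3:R3)*Xv^5*Yv^15*Zv^2*(C τ)^7 + ((-3:R3))*Xv^5*Yv^15*Zv^2*(C τ)^8 + ((-6:R3))*Xv^6*Yv^4*Zv^12*(C τ)^3 + (6:R3)*Xv^6*Yv^4*Zv^12*(C τ)^4 + (9:R3)*Xv^6*Yv^7*Zv^9*(C τ)^3 + ((-9:R3))*Xv^6*Yv^7*Zv^9*(C τ)^4 + ((-3:R3))*Xv^6*Yv^7*Zv^9*(C τ)^6 + (3:R3)*Xv^6*Yv^7*Zv^9*(C τ)^7 + (6:R3)*Xv^6*Yv^10*Zv^6*(C τ)^6 + ((-6:R3))*Xv^6*Yv^10*Zv^6*(C τ)^7 + ((-3:R3))*Xv^6*Yv^13*Zv^3*(C τ)^3 + (3:R3)*Xv^6*Yv^13*Zv^3*(C τ)^4 + ((-3:R3))*Xv^6*Yv^13*Zv^3*(C τ)^6 + (3:R3)*Xv^6*Yv^13*Zv^3*(C τ)^7 + (6:R3)*Xv^7*Yv^2*Zv^13*(C τ)^2 + ((-6:R3))*Xv^7*Yv^2*Zv^13*(C τ)^3 + ((-9:R3))*Xv^7*Yv^5*Zv^10*(C τ)^2 + (9:R3)*Xv^7*Yv^5*Zv^10*(C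 τ)^3 + ((-3:R3))*Xv^7*Yv^5*Zv^10*(C τ)^5 + (3:R3)*Xv^7*Yv^5*Zv^10*(C τ)^6 + (3:R3)*Xv^7*Yv^11*Zv^4*(C τ)^2 + ((-3:R3))*Xv^7*Yv^11*Zv^4*(C τ)^3 + (9:R3)*Xv^7*Yv^11*Zv^4*(C τ)^5 + ((-9:R3))*Xv^7*Yv^11*Zv^4*(C τ)^6 + ((-6:R3))*Xv^7*Yv^14*Zv*(C τ)^5 + (6:R3)*Xv^7*Yv^14*Zv*(C τ)^6 + (3:R3)*Xv^8*Yv^3*Zv^11*(C τ) + ((-3:R3))*Xv^8*Yv^3*Zv^11*(C τ)^2 + (3:R3)*Xv^8*Yv^3*Zv^11*(C τ)^4 + ((-3:R3))*Xv^8*Yv^3*Zv^11*(C τ)^5 + ((-6:R3))*Xv^8*Yv^6*Zv^8*(C τ) + (6:R3)*Xv^8*Yv^6*Zv^8*(C τ)^2 + (3:R3)*Xv^8*Yv^9*Zv^5*(C τ) + ((-3:R3))*Xv^8*Yv^9*Zv^5*(C τ)^2 + ((-9:R3))*Xv^8*Yv^9*Zv^5*(C τ)^4 + (9:R3)*Xv^8*Yv^9*Zv^5*(C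 τ)^5 + (6:R3)*Xv^8*Yv^12*Zv^2*(C τ)^4 + ((-6:R3))*Xv^8*Yv^12*Zv^2*(C τ)^5 + ((-3:R3))*Xv^9*Yv*Zv^12 + (3:R3)*Xv^9*Yv*Zv^12*(C τ) + (6:R3)*Xv^9*Yv^4*Zv^9 + ((-6:R3))*Xv^9*Yv^4*Zv^9*(C τ) + (6:R3)*Xv^9*Yv^4*Zv^9*(C τ)^3 + ((-6:R3))*Xv^9*Yv^4*Zv^9*(C τ)^4 + ((-3:R3))*Xv^9*Yv^7*Zv^6 + (3:R3)*Xv^9*Yv^7*Zv^6*(C τ) + ((-9:R3))*Xv^9*Yv^7*Zv^6*(C τ)^3 + (9:R3)*Xv^9*Yv^7*Zv^6*(C τ)^4 + (3:R3)*Xv^9*Yv^13*(C τ)^3 + ((-3:R3))*Xv^9*Yv^13*(C τ)^4 + ((-6:R3))*Xv^10*Yv^2*Zv^10*(C τ)^2 + (6:R3)*Xv^10*Yv^2*Zv^10*(C τ)^3 + (9:R3)*Xv^10*Yv^5*Zv^7*(C τ)^2 + ((-9:R3))*Xv^10*Yv^5*Zv^7*(C τ)^3 + ((-3:R3))*Xv^10*Yv^11*Zv*(C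 τ)^2 + (3:R3)*Xv^10*Yv^11*Zv*(C τ)^3 + ((-3:R3))*Xv^11*Yv^3*Zv^8*(C τ) + (3:R3)*Xv^11*Yv^3*Zv^8*(C τ)^2 + (6:R3)*Xv^11*Yv^6*Zv^5*(C τ) + ((-6:R3))*Xv^11*Yv^6*Zv^5*(C τ)^2 + ((-3:R3))*Xv^11*Yv^9*Zv^2*(C τ) + (3:R3)*Xv^11*Yv^9*Zv^2*(C τ)^2 + (3:R3)*Xv^12*Yv*Zv^9 + ((-3:R3))*Xv^12*Yv*Zv^9*(C τ) + ((-6:R3))*Xv^12*Yv^4*Zv^6 + (6:R3)*Xv^12*Yv^4*Zv^6*(C τ) + (3:R3)*Xv^12*Yv^7*Zv^3 + ((-3:R3))*Xv^12*Yv^7*Zv^3*(C τ)) * hCtau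

lemma K20 : (Om 2 - C τ * Xi 2) * pencilForm Fpol Gpol 0 - (Om 0 - C τ * Xi 0) * pencilForm Fpol Gpol 2 = 0 := by
  linear_combination -K02

lemma K12 : (Om 1 - C τ * Xi 1) * pencilForm Fpol Gpol 2 - (Om 2 - C τ * Xi 2) * pencilForm Fpol Gpol 1 = 0 := by
  simp only [Om, Xi, pencilForm, Matrix.cons_val_zero, Matrix.cons_val_one, Matrix.head_cons, Matrix.cons_val_two, Matrix.tail_cons, hdF0, hdF1, hdF2, hdG0, hdG1, hdG2]
  simp only [dF0, dF1, dF2, dG0, dG1, dG2, Fpol, Gpol]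
  linear_combination ((3:R3)*Xv^3*Yv^8*Zv^11*(C τ)^7 + ((-3:R3))*Xv^3*Yv^8*Zv^11*(C τ)^8 + ((-6:R3))*Xv^3*Yv^11*Zv^8*(C τ)^7 + (6:R3)*Xv^3*Yv^11*Zv^8*(C τ)^8 + (3:R3)*Xv^3*Yv^14*Zv^5*(C τ)^7 + ((-3:R3))*Xv^3*Yv^14*Zv^5*(C τ)^8 + ((-3:R3))*Xv^4*Yv^6*Zv^12*(C τ)^6 + (3:R3)*Xv^4*Yv^6*Zv^12*(C τ)^7 + (6:R3)*Xv^4*Yv^9*Zv^9*(C τ)^6 + ((-6:R3))*Xv^4*Yv^9*Zv^9*(C τ)^7 + ((-3:R3))*Xv^4*Yv^12*Zv^6*(C τ)^6 + (3:R3)*Xv^4*Yv^12*Zv^6*(C τ)^7 + ((-3:R3))*Xv^5*Yv^4*Zv^13*(C τ)^5 + (3:R3)*Xv^5*Yv^4*Zv^13*(C τ)^6 + (9:R3)*Xv^5*Yv^10*Zv^7*(C τ)^5 + ((-9:R3))*Xv^5*Yv^10*Zv^7*(C τ)^6 + ((-6:R3))*Xv^5*Yv^13*Zv^4*(C τ)^5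 + (6:R3)*Xv^5*Yv^13*Zv^4*(C τ)^6 + (3:R3)*Xv^6*Yv^2*Zv^14*(C τ)^4 + ((-3:R3))*Xv^6*Yv^2*Zv^14*(C τ)^5 + ((-9:R3))*Xv^6*Yv^8*Zv^8*(C τ)^4 + (9:R3)*Xv^6*Yv^8*Zv^8*(C τ)^5 + ((-3:R3))*Xv^6*Yv^8*Zv^8*(C τ)^7 + (3:R3)*Xv^6*Yv^8*Zv^8*(C τ)^8 + (6:R3)*Xv^6*Yv^11*Zv^5*(C τ)^4 + ((-6:R3))*Xv^6*Yv^11*Zv^5*(C τ)^5 + (6:R3)*Xv^6*Yv^11*Zv^5*(C τ)^7 + ((-6:R3))*Xv^6*Yv^11*Zv^5*(C τ)^8 + ((-3:R3))*Xv^6*Yv^14*Zv^2*(C τ)^7 + (3:R3)*Xv^6*Yv^14*Zv^2*(C τ)^8 + (6:R3)*Xv^7*Yv^3*Zv^12*(C τ)^3 + ((-6:R3))*Xv^7*Yv^3*Zv^12*(C τ)^4 + ((-9:R3))*Xv^7*Yv^6*Zv^9*(C τ)^3 + (9:R3)*Xv^7*Yv^6*Zv^9*(C τ)^4 + (3:R3)*Xv^7*Yv^6*Zv^9*(C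 τ)^6 + ((-3:R3))*Xv^7*Yv^6*Zv^9*(C τ)^7 + ((-6:R3))*Xv^7*Yv^9*Zv^6*(C τ)^6 + (6:R3)*Xv^7*Yv^9*Zv^6*(C τ)^7 + (3:R3)*Xv^7*Yv^12*Zv^3*(C τ)^3 + ((-3:R3))*Xv^7*Yv^12*Zv^3*(C τ)^4 + (3:R3)*Xv^7*Yv^12*Zv^3*(C τ)^6 + ((-3:R3))*Xv^7*Yv^12*Zv^3*(C τ)^7 + ((-6:R3))*Xv^8*Yv*Zv^13*(C τ)^2 + (6:R3)*Xv^8*Yv*Zv^13*(C τ)^3 + (9:R3)*Xv^8*Yv^4*Zv^10*(C τ)^2 + ((-9:R3))*Xv^8*Yv^4*Zv^10*(C τ)^3 + (3:R3)*Xv^8*Yv^4*Zv^10*(C τ)^5 + ((-3:R3))*Xv^8*Yv^4*Zv^10*(C τ)^6 + ((-3:R3))*Xv^8*Yv^10*Zv^4*(C τ)^2 + (3:R3)*Xv^8*Yv^10*Zv^4*(C τ)^3 + ((-9:R3))*Xv^8*Yv^10*Zv^4*(C τ)^5 + (9:R3)*Xv^8*Yv^10*Zv^4*(C τ)^6 +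 (6:R3)*Xv^8*Yv^13*Zv*(C τ)^5 + ((-6:R3))*Xv^8*Yv^13*Zv*(C τ)^6 + ((-3:R3))*Xv^9*Yv^2*Zv^11*(C τ) + (3:R3)*Xv^9*Yv^2*Zv^11*(C τ)^2 + ((-3:R3))*Xv^9*Yv^2*Zv^11*(C τ)^4 + (3:R3)*Xv^9*Yv^2*Zv^11*(C τ)^5 + (6:R3)*Xv^9*Yv^5*Zv^8*(C τ) + ((-6:R3))*Xv^9*Yv^5*Zv^8*(C τ)^2 + ((-3:R3))*Xv^9*Yv^8*Zv^5*(C τ) + (3:R3)*Xv^9*Yv^8*Zv^5*(C τ)^2 + (9:R3)*Xv^9*Yv^8*Zv^5*(C τ)^4 + ((-9:R3))*Xv^9*Yv^8*Zv^5*(C τ)^5 + ((-6:R3))*Xv^9*Yv^11*Zv^2*(C τ)^4 + (6:R3)*Xv^9*Yv^11*Zv^2*(C τ)^5 + (3:R3)*Xv^10*Zv^12 + ((-3:R3))*Xv^10*Zv^12*(C τ) + ((-6:R3))*Xv^10*Yv^3*Zv^9 + (6:R3)*Xv^10*Yv^3*Zv^9*(C τ) + ((-6:R3))*Xv^10*Yv^3*Zv^9*(C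 τ)^3 + (6:R3)*Xv^10*Yv^3*Zv^9*(C τ)^4 + (3:R3)*Xv^10*Yv^6*Zv^6 + ((-3:R3))*Xv^10*Yv^6*Zv^6*(C τ) + (9:R3)*Xv^10*Yv^6*Zv^6*(C τ)^3 + ((-9:R3))*Xv^10*Yv^6*Zv^6*(C τ)^4 + ((-3:R3))*Xv^10*Yv^12*(C τ)^3 + (3:R3)*Xv^10*Yv^12*(C τ)^4 + (6:R3)*Xv^11*Yv*Zv^10*(C τ)^2 + ((-6:R3))*Xv^11*Yv*Zv^10*(C τ)^3 + ((-9:R3))*Xv^11*Yv^4*Zv^7*(C τ)^2 + (9:R3)*Xv^11*Yv^4*Zv^7*(C τ)^3 + (3:R3)*Xv^11*Yv^10*Zv*(C τ)^2 + ((-3:R3))*Xv^11*Yv^10*Zv*(C τ)^3 + (3:R3)*Xv^12*Yv^2*Zv^8*(C τ) + ((-3:R3))*Xv^12*Yv^2*Zv^8*(C τ)^2 + ((-6:R3))*Xv^12*Yv^5*Zv^5*(C τ) + (6:R3)*Xv^12*Yv^5*Zv^5*(C τ)^2 + (3:R3)*Xv^12*Yv^8*Zv^2*(C τ) + ((-3:R3))*Xv^12*Yv^8*Zv^2*(C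 τ)^2 + ((-3:R3))*Xv^13*Zv^9 + (3:R3)*Xv^13*Zv^9*(C τ) + (6:R3)*Xv^13*Yv^3*Zv^6 + ((-6:R3))*Xv^13*Yv^3*Zv^6*(C τ) + ((-3:R3))*Xv^13*Yv^6*Zv^3 + (3:R3)*Xv^13*Yv^6*Zv^3*(C τ)) * hCtau

lemma K21 : (Om 2 - C τ * Xi 2) * pencilForm Fpol Gpol 1 - (Om 1 - C τ * Xi 1) * pencilForm Fpol Gpol 2 = 0 := by
  linear_combination -K12

theorem stmt_15 : WedgeZero (fun i => Om i - C τ * Xi i) (pencilForm Fpol Gpol) := by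
  intro i j
  fin_cases i <;> fin_cases j
  · exact sub_self _
  · exact K01
  · exact K02
  · exact K10
  · exact sub_self _
  · exact K12
  · exact K20
  · exact K21
  · exact sub_self _
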